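/- Let G be a finite graph (with a loop at every vertex) having no universal vertices and no true twins. Suppose there exists a set X of vertices such that (i) each vertex not in X is circularly-paired with a vertex in X, and (ii) the induced subgraph G[X] admits a circular-arc representation which is normalized with respect to G. Then G is a circular-arc graph. -/

import Mathlib

/-!
Graphs here are finite, undirected, without parallel edges, and have a loop at
every vertex.  We model them as symmetric reflexive relations.
-/

structure LoopGraph (V : Type) where
  Adj : V → V → Prop
  symm : ∀ u v, Adj u v → Adj v u
  refl : ∀ u, Adj u u

namespace LoopGraph

variable {V W : Type}

/-- Closed neighbourhood `N[u]`. -/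
def nbhd (G : LoopGraph V) (u : V) : Set V := {v | G.Adj u v}

/-- `u` is a universal vertex. -/
def Universal (G : LoopGraph V) (u : V) : Prop := ∀ v, G.Adj u v

/-- `u ≠ v` are true twins if `N[u] = N[v]`. -/
def TrueTwins (G : LoopGraph V) (u v : V) : Prop := u ≠ v ∧ G.nbhd u = G.nbhd v

/-- `uv` is an inclusion edge: it is an edge and `N[u] ⊆ N[v]` or `N[v] ⊆ N[u]`. -/
def InclusionEdge (G : LoopGraph V) (u v : V) : Prop :=
  G.Adj u v ∧ (G.nbhd u ⊆ G.nbhd v ∨ G.nbhd v ⊆ G.nbhd u)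

/-- `u` overlaps `v`: they are adjacent and their closed neighbourhoods are incomparable. -/
def Overlaps (G : LoopGraph V) (u v : V) : Prop :=
  G.Adj u v ∧ ¬ G.nbhd u ⊆ G.nbhd v ∧ ¬ G.nbhd v ⊆ G.nbhd u

/-- `{u,v}` is a spanning pair. -/
def SpanningPair (G : LoopGraph V) (u v : V) : Prop :=
  (∀ x, ¬ G.Adj v x → G.nbhd x ⊆ G.nbhd u) ∧
  (∀ y, ¬ G.Adj u y → G.nbhd y ⊆ G.nbhd v)

/-- `uv` is a 2-overlap edge: an overlap edge forming a spanning pair. -/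
def TwoOverlapEdge (G : LoopGraph V) (u v : V) : Prop :=
  G.Overlaps u v ∧ G.SpanningPair u v

/-- `uv` is a 1-overlap edge: an overlap edge not forming a spanning pair. -/
def OneOverlapEdge (G : LoopGraph V) (u v : V) : Prop :=
  G.Overlaps u v ∧ ¬ G.SpanningPair u v

/-- `{u,v}` is a circular pair: a non-adjacent spanning pair. -/
def CircularPair (G : LoopGraph V) (u v : V) : Prop :=
  G.SpanningPair u v ∧ ¬ G.Adj u v

/-- Every vertex belongs to some circular pair. -/
def CircularlyPaired (G : LoopGraph V) : Prop := ∀ u, ∃ v, G.CircularPair u v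

/-- A walk with `k` edges: vertices `P 0, …, P k` with consecutive vertices adjacent. -/
def IsWalk (G : LoopGraph V) (k : ℕ) (P : ℕ → V) : Prop :=
  ∀ i < k, G.Adj (P i) (P (i + 1))

/-- Vertex `z` avoids the edge `ab`: every neighbour of `z` among `a, b` overlaps `z`,
and if `z` overlaps both `a` and `b` then `a, b` do not overlap each other. -/
def AvoidsEdge (G : LoopGraph V) (z a b : V) : Prop :=
  (G.Adj z a → G.Overlaps z a) ∧ (G.Adj z b → G.Overlaps z b) ∧
  (G.Overlaps z a → G.Overlaps z b → ¬ G.Overlaps a b)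

/-- Vertex `z` and the walk `P` (with `k` edges) avoid each other. -/
def AvoidsWalk (G : LoopGraph V) (z : V) (k : ℕ) (P : ℕ → V) : Prop :=
  (∀ i ≤ k, G.Adj z (P i) → G.Overlaps z (P i)) ∧
  (∀ i < k, G.Overlaps z (P i) → G.Overlaps z (P (i + 1)) →
    ¬ G.Overlaps (P i) (P (i + 1)))

/-- The walks `P` and `Q` (both with `k` edges) avoid each other. -/
def WalksAvoid (G : LoopGraph V) (k : ℕ) (P Q : ℕ → V) : Prop :=
  ∀ i < k, G.AvoidsEdge (P i) (Q i) (Q (i + 1)) ∧ G.AvoidsEdge (Q (i + 1)) (P i) (P (i + 1))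

/-- `{x,y}` is a `z`-invertible pair, i.e. an invertible pair anchored at `z`. -/
def ZInvertiblePair (G : LoopGraph V) (z x y : V) : Prop :=
  x ≠ y ∧ x ≠ z ∧ y ≠ z ∧
  ∃ k, ∃ P Q : ℕ → V, G.IsWalk k P ∧ G.IsWalk k Q ∧
    P 0 = x ∧ P k = y ∧ Q 0 = y ∧ Q k = x ∧
    G.WalksAvoid k P Q ∧ G.AvoidsWalk z k P ∧ G.AvoidsWalk z k Q

/-- `G` contains an anchored invertible pair. -/
def HasAnchoredInvertiblePair (G : LoopGraph V) : Prop :=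
  ∃ z x y, G.ZInvertiblePair z x y

end LoopGraph

/-!
Circular arcs: the circle is modelled as the half-open interval `[0,1)`;
an arc is described by its left and right endpoints (clockwise = increasing),
wrapping around if necessary.
-/

/-- Membership of the point `t` in the clockwise arc from `l` to `r`. -/
def arcMem (l r t : ℝ) : Prop :=
  (l ≤ r ∧ l ≤ t ∧ t ≤ r) ∨ (r < l ∧ (l ≤ t ∨ t ≤ r))

/-- The arc `[l₁,r₁]` is contained in the arc `[l₂,r₂]`. -/
def arcSubset (l₁ r₁ l₂ r₂ : ℝ) : Prop :=
  ∀ t ∈ Set.Ico (0 : ℝ) 1, arcMem l₁ r₁ t → arcMem l₂ r₂ t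

/-- The arc `[lu,ru]` properly contains the arc `[lv,rv]`. -/
def arcProperContains (lu ru lv rv : ℝ) : Prop :=
  arcSubset lv rv lu ru ∧ ¬ arcSubset lu ru lv rv

/-- The arcs `[lu,ru]` and `[lv,rv]` together cover the whole circle. -/
def arcsCover (lu ru lv rv : ℝ) : Prop :=
  ∀ t ∈ Set.Ico (0 : ℝ) 1, arcMem lu ru t ∨ arcMem lv rv t

/-- `b` lies strictly between `a` and `c` in the clockwise cyclic order on `[0,1)`. -/
def cycBtw (a b c : ℝ) : Prop :=
  (a < b ∧ b < c) ∨ (b < c ∧ c < a) ∨ (c < a ∧ a < b)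

/-- The four points `a, b, c, d` of `[0,1)` occur in this clockwise cyclic order. -/
def cyc4 (a b c d : ℝ) : Prop := cycBtw a b c ∧ cycBtw a c d

namespace LoopGraph

variable {V W : Type}

/-- `(l, r)` is a circular-arc representation of `G`: all endpoints are distinct and
two vertices are adjacent iff their arcs intersect. -/
def IsCARep (G : LoopGraph V) (l r : V → ℝ) : Prop :=
  (∀ v, l v ∈ Set.Ico (0 : ℝ) 1) ∧ (∀ v, r v ∈ Set.Ico (0 : ℝ) 1) ∧
  Function.Injective (Sum.elim l r) ∧
  ∀ u v, (G.Adj u v ↔ ∃ t ∈ Set.Ico (0 : ℝ) 1,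
    arcMem (l u) (r u) t ∧ arcMem (l v) (r v) t)

/-- `G` is a circular-arc graph. -/
def IsCircularArc (G : LoopGraph V) : Prop := ∃ l r : V → ℝ, G.IsCARep l r

/-- A normalized circular-arc representation of `G`. -/
def IsNormalizedRep (G : LoopGraph V) (l r : V → ℝ) : Prop :=
  G.IsCARep l r ∧
  ∀ u v, G.Adj u v → u ≠ v →
    (arcProperContains (l u) (r u) (l v) (r v) ↔ G.nbhd v ⊆ G.nbhd u) ∧
    (arcsCover (l u) (r u) (l v) (r v) ↔ G.TwoOverlapEdge u v)

/-- A circular-arc representation of the induced subgraph `G[X]` which is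
normalized with respect to `G`. -/
def IsNormalizedRepOn (G : LoopGraph V) (X : Set V) (l r : V → ℝ) : Prop :=
  (∀ v ∈ X, l v ∈ Set.Ico (0 : ℝ) 1) ∧ (∀ v ∈ X, r v ∈ Set.Ico (0 : ℝ) 1) ∧
  Set.InjOn l X ∧ Set.InjOn r X ∧ (∀ u ∈ X, ∀ v ∈ X, l u ≠ r v) ∧
  (∀ u ∈ X, ∀ v ∈ X,
    (G.Adj u v ↔ ∃ t ∈ Set.Ico (0 : ℝ) 1,
      arcMem (l u) (r u) t ∧ arcMem (l v) (r v) t)) ∧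
  (∀ u ∈ X, ∀ v ∈ X, G.Adj u v → u ≠ v →
    (arcProperContains (l u) (r u) (l v) (r v) ↔ G.nbhd v ⊆ G.nbhd u) ∧
    (arcsCover (l u) (r u) (l v) (r v) ↔ G.TwoOverlapEdge u v))

/-! Circular completions. -/

/-- `f` exhibits `G` as an induced subgraph of `H`. -/
def InducedEmb (G : LoopGraph V) (H : LoopGraph W) (f : V → W) : Prop :=
  Function.Injective f ∧ ∀ u v, (G.Adj u v ↔ H.Adj (f u) (f v))

/-- Every edge of `G` has the same type (inclusion / 1-overlap / 2-overlap)
in `G` and in `H`. -/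
def SameEdgeTypes (G : LoopGraph V) (H : LoopGraph W) (f : V → W) : Prop :=
  ∀ u v, G.Adj u v →
    ((G.InclusionEdge u v ↔ H.InclusionEdge (f u) (f v)) ∧
     (G.OneOverlapEdge u v ↔ H.OneOverlapEdge (f u) (f v)) ∧
     (G.TwoOverlapEdge u v ↔ H.TwoOverlapEdge (f u) (f v)))

/-- `H` (with embedding `f`) is a circular completion of `G`: a circularly-paired
graph with the fewest possible vertices containing `G` as an induced subgraph with
all edge types preserved. -/
def IsCircularCompletion (G : LoopGraph V) (H : LoopGraph W) (f : V → W) : Prop :=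
  Finite W ∧ G.InducedEmb H f ∧ G.SameEdgeTypes H f ∧ H.CircularlyPaired ∧
  ∀ (W' : Type) (H' : LoopGraph W') (f' : V → W'), Finite W' →
    G.InducedEmb H' f' → G.SameEdgeTypes H' f' → H'.CircularlyPaired →
    Nat.card W ≤ Nat.card W'

/-! The anchored Δ-knotting graph. -/

/-- `A(z)`: vertices nonadjacent to `z` or overlapping `z`. -/
def Aset (G : LoopGraph V) (z : V) : Set V := {u | ¬ G.Adj z u ∨ G.Overlaps z u}

/-- `x` and `y` are `uz`-connected. -/
def UZConnected (G : LoopGraph V) (u z x y : V) : Prop :=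
  ¬ G.InclusionEdge x u ∧ ¬ G.InclusionEdge y u ∧ ¬ G.InclusionEdge x z ∧
  ¬ G.InclusionEdge y z ∧ ¬ G.InclusionEdge u z ∧
  ∃ k, ∃ P : ℕ → V, G.IsWalk k P ∧ P 0 = x ∧ P k = y ∧
    G.AvoidsWalk u k P ∧ G.AvoidsWalk z k P

/-- `X` is a `uz`-component: a maximal set of pairwise `uz`-connected vertices. -/
def IsUZComponent (G : LoopGraph V) (u z : V) (X : Set V) : Prop :=
  X.Nonempty ∧ (∀ x ∈ X, ∀ y ∈ X, G.UZConnected u z x y) ∧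
  ∀ Y : Set V, X ⊆ Y → (∀ x ∈ Y, ∀ y ∈ Y, G.UZConnected u z x y) → Y = X

/-- Vertices of the `z`-anchored Δ-knotting graph: copies `(u, X)` of `u ∈ A(z)`,
one for each `uz`-component `X`. -/
def KnotVertex (G : LoopGraph V) (z : V) (p : V × Set V) : Prop :=
  p.1 ∈ G.Aset z ∧ G.IsUZComponent p.1 z p.2

/-- Edges of the `z`-anchored Δ-knotting graph: for each edge `uv` of `G` with
`u, v ∈ A(z)`, an edge between the copy of `u` for `X` and the copy of `v` for `Y`
whenever `v ∈ X` and `u ∈ Y`. -/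
def KnotAdj (G : LoopGraph V) (z : V) (p q : V × Set V) : Prop :=
  G.Adj p.1 q.1 ∧ p.1 ∈ G.Aset z ∧ q.1 ∈ G.Aset z ∧ q.1 ∈ p.2 ∧ p.1 ∈ q.2

/-- The `z`-anchored Δ-knotting graph of `G` is bipartite (it is 2-colourable). -/
def KnotBipartite (G : LoopGraph V) (z : V) : Prop :=
  ∃ c : V × Set V → Bool, ∀ p q, G.KnotVertex z p → G.KnotVertex z q →
    G.KnotAdj z p q → c p ≠ c q

/-! Non-inverting sets. -/

/-- `X` is a non-inverting set of `G`. -/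
def NonInvertingSet (G : LoopGraph V) (X : Set V) : Prop :=
  (∀ u ∈ X, ∀ v ∈ X, ¬ G.TwoOverlapEdge u v) ∧
  ¬ ∃ x ∈ X, ∃ y ∈ X, ∃ k, 0 < k ∧ ∃ P Q : ℕ → V,
      G.IsWalk k P ∧ G.IsWalk k Q ∧ (∀ i ≤ k, P i ∈ X) ∧ (∀ i ≤ k, Q i ∈ X) ∧
      P 0 = x ∧ P k = y ∧ Q 0 = y ∧ Q k = x ∧ G.WalksAvoid k P Q

end LoopGraph

/-!
Edge-labelled graphs: graphs (with loops) in which every edge is labelled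
inclusion or overlap, loops being labelled inclusion.
-/

structure ELGraph (V : Type) where
  Adj : V → V → Prop
  symm : ∀ u v, Adj u v → Adj v u
  refl : ∀ u, Adj u u
  /-- `Ovl u v` means the edge `uv` is labelled as an overlap edge. -/
  Ovl : V → V → Prop
  ovl_symm : ∀ u v, Ovl u v → Ovl v u
  ovl_adj : ∀ u v, Ovl u v → Adj u v
  ovl_irrefl : ∀ u, ¬ Ovl u u

namespace ELGraph

variable {V : Type}

/-- Closed neighbourhood `N[u]`. -/
def nbhd (G : ELGraph V) (u : V) : Set V := {v | G.Adj u v}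

/-- `uv` is (labelled as) an inclusion edge. -/
def InclEdge (G : ELGraph V) (u v : V) : Prop := G.Adj u v ∧ ¬ G.Ovl u v

/-- A walk with `k` edges. -/
def IsWalk (G : ELGraph V) (k : ℕ) (P : ℕ → V) : Prop :=
  ∀ i < k, G.Adj (P i) (P (i + 1))

/-- `z` avoids the edge `ab`: every neighbour of `z` among `a, b` overlaps `z`, and if
`z` overlaps both `a` and `b` then the edge `ab` is an inclusion edge. -/
def AvoidsEdge (G : ELGraph V) (z a b : V) : Prop :=
  (G.Adj z a → G.Ovl z a) ∧ (G.Adj z b → G.Ovl z b) ∧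
  (G.Ovl z a → G.Ovl z b → ¬ G.Ovl a b)

/-- The walks `P` and `Q` (both with `k` edges) avoid each other. -/
def WalksAvoid (G : ELGraph V) (k : ℕ) (P Q : ℕ → V) : Prop :=
  ∀ i < k, G.AvoidsEdge (P i) (Q i) (Q (i + 1)) ∧ G.AvoidsEdge (Q (i + 1)) (P i) (P (i + 1))

/-- The ordered pair `p` is related to the ordered pair `q`: there exist a walk from
`p.1` to `q.1` and a walk from `p.2` to `q.2`, of the same (positive) length, that
avoid each other. -/
def Related (G : ELGraph V) (p q : V × V) : Prop :=
  ∃ k, 0 < k ∧ ∃ P Q : ℕ → V, G.IsWalk k P ∧ G.IsWalk k Q ∧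
    P 0 = p.1 ∧ Q 0 = p.2 ∧ P k = q.1 ∧ Q k = q.2 ∧ G.WalksAvoid k P Q

/-- A Δ-implication class: a maximal set of pairwise related ordered pairs. -/
def IsDeltaClass (G : ELGraph V) (A : Set (V × V)) : Prop :=
  A.Nonempty ∧ (∀ p ∈ A, ∀ q ∈ A, G.Related p q) ∧
  ∀ B : Set (V × V), A ⊆ B → (∀ p ∈ B, ∀ q ∈ B, G.Related p q) → B = A

/-- `A⁻¹ = {(u,v) : (v,u) ∈ A}`. -/
def inv (A : Set (V × V)) : Set (V × V) := {p | p.swap ∈ A}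

/-- `span A`: the set of vertices incident to pairs of `A`. -/
def span (A : Set (V × V)) : Set V := {v | ∃ p ∈ A, v = p.1 ∨ v = p.2}

/-- `S` induces a clique. -/
def IsClique (G : ELGraph V) (S : Set V) : Prop := ∀ a ∈ S, ∀ b ∈ S, G.Adj a b

/-- A Δ-module. -/
def IsDeltaModule (G : ELGraph V) (S : Set V) : Prop :=
  S.Nonempty ∧
  (∀ x, x ∉ S →
    ((∀ s ∈ S, ¬ G.Adj x s) ∨ (∀ s ∈ S, G.InclEdge x s) ∨ (∀ s ∈ S, G.Ovl x s))) ∧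
  (¬ G.IsClique S → ∀ x, x ∉ S → ∀ s ∈ S, ¬ G.Ovl x s)

/-- A trivial Δ-module: the whole vertex set or a single vertex. -/
def TrivialModule (S : Set V) : Prop := S = Set.univ ∨ ∃ a : V, S = {a}

/-- `{a,b}` is a Δ-invertible pair: `(a,b)` is related to `(b,a)`. -/
def DeltaInvertiblePair (G : ELGraph V) (a b : V) : Prop := G.Related (a, b) (b, a)

/-- An interval ordering of an edge-labelled graph. -/
def IsIntervalOrdering (G : ELGraph V) (lt : V → V → Prop) : Prop :=
  IsStrictTotalOrder V lt ∧
  ¬ ∃ a b c, lt a b ∧ lt b c ∧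
    ((¬ G.Adj a b ∧ G.Adj a c) ∨
     (G.InclEdge a b ∧ ¬ G.Adj a c ∧ G.Adj b c) ∨
     (G.Ovl a b ∧ G.Adj a c ∧ ¬ G.Adj b c) ∨
     (G.Ovl a b ∧ G.Ovl b c ∧ G.InclEdge a c) ∨
     (G.InclEdge a b ∧ G.InclEdge b c ∧ G.Ovl a c))

/-- An interval representation of `G` consistent with its labelling. -/
def IsConsistentIntervalRep (G : ELGraph V) (l r : V → ℝ) : Prop :=
  (∀ v, l v ≤ r v) ∧
  (∀ u v, (G.Adj u v ↔ (Set.Icc (l u) (r u) ∩ Set.Icc (l v) (r v)).Nonempty)) ∧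
  (∀ u v, (G.Ovl u v ↔
    ((Set.Icc (l u) (r u) ∩ Set.Icc (l v) (r v)).Nonempty ∧
     ¬ Set.Icc (l u) (r u) ⊆ Set.Icc (l v) (r v) ∧
     ¬ Set.Icc (l v) (r v) ⊆ Set.Icc (l u) (r u))))

/-- A consistently edge-labelled graph: there is a transitive orientation `D` of its
inclusion edges (between distinct vertices) such that `D u v → N[v] ⊆ N[u]`. -/
def ConsistentlyLabelled (G : ELGraph V) : Prop :=
  ∃ D : V → V → Prop,
    (∀ u v, D u v → u ≠ v ∧ G.InclEdge u v) ∧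
    (∀ u v, u ≠ v → G.InclEdge u v → (D u v ↔ ¬ D v u)) ∧
    (∀ u v w, D u v → D v w → D u w) ∧
    (∀ u v, D u v → G.nbhd v ⊆ G.nbhd u)

end ELGraph



lemma fr_mem (x : ℝ) : Int.fract x ∈ Set.Ico (0:ℝ) 1 :=
  ⟨Int.fract_nonneg x, Int.fract_lt_one x⟩

lemma fr_eq_self {x : ℝ} (h : x ∈ Set.Ico (0:ℝ) 1) : Int.fract x = x :=
  Int.fract_eq_self.2 ⟨h.1, h.2⟩

lemma fr_congr {x y : ℝ} (z : ℤ) (h : x - y = z) : Int.fract x = Int.fract y :=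
  Int.fract_eq_fract.mpr ⟨z, h⟩

lemma fr_eval {x : ℝ} (k : ℤ) (h1 : 0 ≤ x - k) (h2 : x - k < 1) : Int.fract x = x - k := by
  rw [fr_congr k (by ring : x - (x - k) = (k:ℝ))]
  exact fr_eq_self ⟨h1, h2⟩

lemma fr_sub_fr (x y : ℝ) : Int.fract (Int.fract x - Int.fract y) = Int.fract (x - y) := by
  apply fr_congr (⌊y⌋ - ⌊x⌋)
  unfold Int.fract; push_cast; ring

lemma fr_add_fr (x y : ℝ) : Int.fract (Int.fract x + Int.fract y) = Int.fract (x + y) := by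
  apply fr_congr (-⌊y⌋ - ⌊x⌋)
  unfold Int.fract; push_cast; ring

lemma fr_sub_left (x y : ℝ) : Int.fract (Int.fract x - y) = Int.fract (x - y) := by
  apply fr_congr (-⌊x⌋); unfold Int.fract; push_cast; ring

lemma fr_add_left (x y : ℝ) : Int.fract (Int.fract x + y) = Int.fract (x + y) := by
  apply fr_congr (-⌊x⌋); unfold Int.fract; push_cast; ring

lemma fr_sub_le {x y : ℝ} (hx : x ∈ Set.Ico (0:ℝ) 1) (hy : y ∈ Set.Ico (0:ℝ) 1)
    (h : y ≤ x) : Int.fract (x - y) = x - y := by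
  obtain ⟨hx0, hx1⟩ := hx; obtain ⟨hy0, hy1⟩ := hy
  exact fr_eq_self ⟨by linarith, by linarith⟩

lemma fr_sub_gt {x y : ℝ} (hx : x ∈ Set.Ico (0:ℝ) 1) (hy : y ∈ Set.Ico (0:ℝ) 1)
    (h : x < y) : Int.fract (x - y) = x - y + 1 := by
  obtain ⟨hx0, hx1⟩ := hx; obtain ⟨hy0, hy1⟩ := hy
  have h := fr_eval (x := x - y) (-1) (by push_cast; linarith) (by push_cast; linarith)
  push_cast at h; linarith

lemma fr_zero_iff {x y : ℝ} (hx : x ∈ Set.Ico (0:ℝ) 1) (hy : y ∈ Set.Ico (0:ℝ) 1) :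
    Int.fract (x - y) = 0 ↔ x = y := by
  constructor
  · intro h
    rcases le_or_gt y x with hc | hc
    · rw [fr_sub_le hx hy hc] at h; linarith
    · rw [fr_sub_gt hx hy hc] at h
      obtain ⟨hx0, hx1⟩ := hx; obtain ⟨hy0, hy1⟩ := hy; linarith
  · rintro rfl; simp

lemma arcMem_iff {l r t : ℝ} (hl : l ∈ Set.Ico (0:ℝ) 1) (hr : r ∈ Set.Ico (0:ℝ) 1)
    (ht : t ∈ Set.Ico (0:ℝ) 1) :
    arcMem l r t ↔ Int.fract (t - l) ≤ Int.fract (r - l) := by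
  have hl0 := hl.1; have hl1 := hl.2; have hr0 := hr.1; have hr1 := hr.2
  have ht0 := ht.1; have ht1 := ht.2
  rcases le_or_gt l r with h1 | h1 <;> rcases le_or_gt l t with h2 | h2
  · rw [fr_sub_le ht hl h2, fr_sub_le hr hl h1]
    constructor
    · rintro (⟨_, _, h⟩ | ⟨h, _⟩) <;> linarith
    · intro h; exact Or.inl ⟨h1, h2, by linarith⟩
  · rw [fr_sub_gt ht hl h2, fr_sub_le hr hl h1]
    constructor
    · rintro (⟨_, h, _⟩ | ⟨h, _⟩) <;> linarith
    · intro h; exfalso; linarith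
  · rw [fr_sub_le ht hl h2, fr_sub_gt hr hl h1]
    constructor
    · intro _; linarith
    · intro _; exact Or.inr ⟨h1, Or.inl h2⟩
  · rw [fr_sub_gt ht hl h2, fr_sub_gt hr hl h1]
    constructor
    · rintro (⟨c, _, _⟩ | ⟨_, c | c⟩) <;> linarith
    · intro h; exact Or.inr ⟨h1, Or.inr (by linarith)⟩

lemma fr_comp {x y : ℝ} (h : Int.fract (x - y) ≠ 0) :
    Int.fract (y - x) = 1 - Int.fract (x - y) := by
  rw [show y - x = -(x - y) by ring]
  exact Int.fract_neg h

lemma mem1 {a b t : ℝ} (ha : a ∈ Set.Ico (0:ℝ) 1) (hb : b ∈ Set.Ico (0:ℝ) 1)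
    (ht : t ∈ Set.Ico (0:ℝ) 1) (hab : a ≠ b) :
    arcMem a b t ↔ ¬(0 < Int.fract (t - b) ∧ Int.fract (t - b) < Int.fract (a - b)) := by
  have hg0 : Int.fract (a - b) ≠ 0 := fun h => hab ((fr_zero_iff ha hb).1 h)
  have hcomp : Int.fract (b - a) = 1 - Int.fract (a - b) := fr_comp hg0
  have hkey : Int.fract (t - a) = Int.fract (Int.fract (t - b) - Int.fract (a - b)) := by
    rw [fr_sub_fr, show (t - b) - (a - b) = t - a by ring]
  have hτ := fr_mem (t - b); have hg := fr_mem (a - b)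
  rw [arcMem_iff ha hb ht, hcomp, hkey]
  rcases le_or_gt (Int.fract (a - b)) (Int.fract (t - b)) with hc | hc
  · rw [fr_sub_le hτ hg hc]
    constructor
    · intro _ ⟨_, h2⟩; linarith
    · intro _; linarith [hτ.2]
  · rw [fr_sub_gt hτ hg hc]
    constructor
    · intro h hcon; linarith [hcon.1]
    · intro h
      have : ¬ (0 < Int.fract (t - b)) := fun h0 => h ⟨h0, hc⟩
      linarith [hτ.1]

lemma mem2 {a b t ε : ℝ} (ha : a ∈ Set.Ico (0:ℝ) 1) (hb : b ∈ Set.Ico (0:ℝ) 1)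
    (ht : t ∈ Set.Ico (0:ℝ) 1) (hε : 0 < ε) (h2ε : 2*ε < Int.fract (a - b)) :
    arcMem (Int.fract (b + ε)) (Int.fract (a - ε)) t ↔
      (ε ≤ Int.fract (t - b) ∧ Int.fract (t - b) ≤ Int.fract (a - b) - ε) := by
  have hg := fr_mem (a - b); have hτ := fr_mem (t - b)
  have e1 : Int.fract (t - Int.fract (b + ε)) = Int.fract (Int.fract (t - b) - ε) := by
    rw [fr_sub_left]
    apply fr_congr (⌊b + ε⌋)
    unfold Int.fract; push_cast; ring
  have e2 : Int.fract (Int.fract (a - ε) - Int.fract (b + ε)) = Int.fract (a - b) - 2*ε := by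
    rw [fr_sub_fr, show (a - ε) - (b + ε) = (a - b) - 2*ε by ring,
      show Int.fract ((a - b) - 2*ε) = Int.fract (Int.fract (a - b) - 2*ε) from
        (fr_sub_left _ _).symm]
    exact fr_eq_self ⟨by linarith, by linarith [hg.2]⟩
  rw [arcMem_iff (fr_mem _) (fr_mem _) ht, e1, e2]
  rcases le_or_gt ε (Int.fract (t - b)) with hc | hc
  · rw [fr_sub_le hτ ⟨hε.le, by linarith [hg.2]⟩ hc]
    constructor
    · intro h; exact ⟨hc, by linarith⟩
    · intro h; linarith [h.2]

  · rw [fr_sub_gt hτ ⟨hε.le, by linarith [hg.2]⟩ hc]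
    constructor
    · intro h; exfalso; linarith [hτ.1, hg.2]
    · intro h; exfalso; linarith [h.1]

lemma mem3 {lw rw t : ℝ} (b : ℝ) (hl : lw ∈ Set.Ico (0:ℝ) 1) (hr : rw ∈ Set.Ico (0:ℝ) 1)
    (ht : t ∈ Set.Ico (0:ℝ) 1) :
    arcMem lw rw t ↔
      Int.fract (Int.fract (t - b) - Int.fract (lw - b)) ≤ Int.fract (rw - lw) := by
  rw [arcMem_iff hl hr ht, fr_sub_fr, show (t - b) - (lw - b) = t - lw by ring]

lemma bl1 {δ ε x h τ : ℝ} (hδ : 0 < δ) (hε0 : 0 < ε) (hεδ : ε < δ)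
    (hx1 : δ ≤ x) (hx2 : x ≤ 1 - δ)
    (hrw : δ ≤ Int.fract (x + h)) (hh0 : 0 ≤ h) (hh1 : h < 1)
    (hτ0 : 0 ≤ τ) (hτε : τ < ε)
    (hmem : Int.fract (τ - x) ≤ h) : Int.fract (ε - x) ≤ h := by
  have e1 : Int.fract (τ - x) = τ - x + 1 :=
    fr_sub_gt ⟨hτ0, by linarith⟩ ⟨by linarith, by linarith⟩ (by linarith)
  have e2 : Int.fract (ε - x) = ε - x + 1 :=
    fr_sub_gt ⟨hε0.le, by linarith⟩ ⟨by linarith, by linarith⟩ (by linarith)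
  by_contra hc
  push_neg at hc
  rw [e2] at hc; rw [e1] at hmem
  have e3 := fr_eval (x := x + h) 1 (by push_cast; linarith) (by push_cast; linarith)
  push_cast at e3
  linarith [e3 ▸ hrw]

lemma bl2 {δ ε g x h τ : ℝ} (hδ : 0 < δ) (hε0 : 0 < ε) (hεδ : ε < δ)
    (hx1 : δ ≤ x) (hx2 : x ≤ 1 - δ) (hg1 : δ ≤ g) (hg2 : g ≤ 1 - δ)
    (hxg : x ≤ g - δ ∨ g + δ ≤ x)
    (hτ1 : g - ε < τ) (hτ2 : τ < g)
    (hmem : Int.fract (τ - x) ≤ h) : Int.fract (g - ε - x) ≤ h := by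
  rcases hxg with hc | hc
  · have e1 : Int.fract (τ - x) = τ - x :=
      fr_sub_le ⟨by linarith, by linarith⟩ ⟨by linarith, by linarith⟩ (by linarith)
    have e2 : Int.fract (g - ε - x) = g - ε - x :=
      fr_sub_le ⟨by linarith, by linarith⟩ ⟨by linarith, by linarith⟩ (by linarith)
    rw [e2]; rw [e1] at hmem; linarith
  · have e1 : Int.fract (τ - x) = τ - x + 1 :=
      fr_sub_gt ⟨by linarith, by linarith⟩ ⟨by linarith, by linarith⟩ (by linarith)
    have e2 : Int.fract (g - ε - x) = g - ε - x + 1 :=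
      fr_sub_gt ⟨by linarith, by linarith⟩ ⟨by linarith, by linarith⟩ (by linarith)
    rw [e2]; rw [e1] at hmem; linarith

lemma sep {δ e f s s' : ℝ} (hδ : 0 < δ) (hδ4 : δ ≤ 1/4)
    (hef : e ≠ f → δ ≤ |e - f| ∧ |e - f| ≤ 1 - δ)
    (hs : |s| ≤ δ/3) (hs' : |s'| ≤ δ/3)
    (h : Int.fract (e + s) = Int.fract (f + s')) : e = f ∧ s = s' := by
  obtain ⟨z, hz⟩ := Int.fract_eq_fract.mp h
  obtain ⟨hs1, hs2⟩ := abs_le.mp hs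
  obtain ⟨hs1', hs2'⟩ := abs_le.mp hs'
  by_cases hef0 : e = f
  · subst hef0
    have hzr : (z : ℝ) = s - s' := by linarith
    have h1 : (-1 : ℝ) < z := by rw [hzr]; linarith
    have h2 : (z : ℝ) < 1 := by rw [hzr]; linarith
    have hz0 : z = 0 := by
      have h1' : (-1 : ℤ) < z := by exact_mod_cast h1
      have h2' : z < (1 : ℤ) := by exact_mod_cast h2
      omega
    rw [hz0] at hzr; push_cast at hzr
    exact ⟨rfl, by linarith⟩
  · exfalso
    obtain ⟨hd1, hd2⟩ := hef hef0
    have hzr : (z : ℝ) = (e - f) + (s - s') := by linarith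
    have habs : 1 ≤ |z| := Int.one_le_abs (by
      intro h0; rw [h0] at hzr; push_cast at hzr
      rcases abs_cases (e - f) with ⟨he, _⟩ | ⟨he, _⟩ <;> nlinarith)
    have : (1:ℝ) ≤ |(z:ℝ)| := by exact_mod_cast habs
    rw [hzr] at this
    rcases abs_cases ((e - f) + (s - s')) with ⟨he, _⟩ | ⟨he, _⟩ <;>
      rcases abs_cases (e - f) with ⟨hf, _⟩ | ⟨hf, _⟩ <;> nlinarith

set_option maxHeartbeats 1000000 in
lemma glue {δ ε ε' g g' β τ₀ : ℝ}
    (hδ : 0 < δ) (hδ4 : δ ≤ 1/4)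
    (hε0 : 0 < ε) (hε : ε < δ/3) (hε0' : 0 < ε') (hε' : ε' < δ/3)
    (hg1 : δ ≤ g) (hg2 : g ≤ 1 - δ) (hg1' : δ ≤ g') (hg2' : g' ≤ 1 - δ)
    (hβ1 : δ ≤ β) (hβ2 : β ≤ 1 - δ)
    (hβg : δ ≤ Int.fract (β - g)) (hgβ : δ ≤ Int.fract (g - β))
    (hγ1 : δ ≤ Int.fract (β + g')) (hγ2 : Int.fract (β + g') ≤ 1 - δ)
    (hγg : δ ≤ Int.fract (Int.fract (β + g') - g))
    (hgγ : δ ≤ Int.fract (g - Int.fract (β + g')))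
    (hτ0 : 0 < τ₀) (hτg : τ₀ < g)
    (hφ0 : 0 < Int.fract (τ₀ - β)) (hφg : Int.fract (τ₀ - β) < g') :
    ∃ σ, 0 ≤ σ ∧ σ < 1 ∧ ε ≤ σ ∧ σ ≤ g - ε ∧
      ε' ≤ Int.fract (σ - β) ∧ Int.fract (σ - β) ≤ g' - ε' := by
  set γ := Int.fract (β + g') with hγdef
  set φ₀ := Int.fract (τ₀ - β) with hφdef
  have hτ1 : τ₀ < 1 := by linarith
  by_cases c1 : τ₀ < ε
  · -- σ = ε
    have eφ : φ₀ = τ₀ - β + 1 :=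
      fr_sub_gt ⟨hτ0.le, hτ1⟩ ⟨by linarith, by linarith⟩ (by linarith)
    have eε : Int.fract (ε - β) = ε - β + 1 :=
      fr_sub_gt ⟨hε0.le, by linarith⟩ ⟨by linarith, by linarith⟩ (by linarith)
    refine ⟨ε, by linarith, by linarith, le_refl _, by linarith, ?_, ?_⟩
    · rw [eε]; linarith
    · rw [eε]
      by_contra hc; push_neg at hc
      have hβg' : 1 < β + g' := by linarith
      have eγ := fr_eval (x := β + g') 1 (by push_cast; linarith) (by push_cast; linarith)
      push_cast at eγ
      rw [hγdef] at hγ1  -- ?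
      rw [eγ] at hγ1
      linarith
  · by_cases c2 : g - ε < τ₀
    · -- σ = g - ε
      push_neg at c1
      have hd2 : Int.fract (g - β) ≤ 1 - δ := by
        have hne : Int.fract (β - g) ≠ 0 := by linarith
        have := Int.fract_neg (x := β - g) hne
        rw [show -(β - g) = g - β by ring] at this
        linarith
      have eσ : Int.fract (g - ε - β) = Int.fract (g - β) - ε := by
        rw [show g - ε - β = (g - β) - ε by ring,
          show Int.fract ((g - β) - ε) = Int.fract (Int.fract (g - β) - ε) from
            (fr_sub_left _ _).symm]
        exact fr_eq_self ⟨by linarith, by linarith⟩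
      refine ⟨g - ε, by linarith, by linarith, by linarith, le_refl _, ?_, ?_⟩
      · rw [eσ]; linarith
      · rw [eσ]
        by_contra hc; push_neg at hc
        have eφ : φ₀ = Int.fract (g - β) - (g - τ₀) := by
          rw [hφdef, show τ₀ - β = (g - β) - (g - τ₀) by ring,
            show Int.fract ((g - β) - (g - τ₀)) = Int.fract (Int.fract (g - β) - (g - τ₀)) from
              (fr_sub_left _ _).symm]
          exact fr_eq_self ⟨by linarith, by linarith⟩
        have hφup : g' - ε' < φ₀ := by rw [eφ]; linarith
        -- fr(γ - g) = fr((g' - φ₀) - (g - τ₀))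
        have ecg : Int.fract (γ - g) = Int.fract ((g' - φ₀) - (g - τ₀)) := by
          apply fr_congr (-⌊β + g'⌋ - ⌊τ₀ - β⌋)
          rw [hγdef, hφdef]; unfold Int.fract; push_cast; ring
        have hgγ2 : Int.fract (γ - g) ≤ 1 - δ := by
          have hne : Int.fract (g - γ) ≠ 0 := by linarith
          have := Int.fract_neg (x := g - γ) hne
          rw [show -(g - γ) = γ - g by ring] at this
          linarith
        rcases le_or_gt (g - τ₀) (g' - φ₀) with hAB | hAB
        · have eval : Int.fract ((g' - φ₀) - (g - τ₀)) = (g' - φ₀) - (g - τ₀) :=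
            fr_sub_le ⟨by linarith, by linarith⟩ ⟨by linarith, by linarith⟩ hAB
          rw [ecg, eval] at hγg; linarith
        · have eval : Int.fract ((g' - φ₀) - (g - τ₀)) = (g' - φ₀) - (g - τ₀) + 1 :=
            fr_sub_gt ⟨by linarith, by linarith⟩ ⟨by linarith, by linarith⟩ hAB
          rw [ecg, eval] at hgγ2; linarith
    · by_cases c3 : φ₀ < ε'
      · -- σ = β + ε'
        push_neg at c1 c2
        have eσ : Int.fract (β + ε' - β) = ε' := by
          rw [show β + ε' - β = ε' by ring]; exact fr_eq_self ⟨hε0'.le, by linarith⟩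
        have hβne : β ≠ g := by
          intro h; rw [h] at hgβ; simp at hgβ; linarith
        have hβltg : β < g := by
          rcases lt_or_gt_of_ne hβne with h | h
          · exact h
          · exfalso
            have hβg2 : g + δ ≤ β := by
              have := fr_sub_le (x := β) (y := g) ⟨by linarith, by linarith⟩
                ⟨by linarith, by linarith⟩ (le_of_lt h)
              linarith [this ▸ hβg]
            rcases le_or_gt β τ₀ with hc | hc
            · have : φ₀ = τ₀ - β :=
                fr_sub_le ⟨hτ0.le, hτ1⟩ ⟨by linarith, by linarith⟩ hc
              linarith
            · have : φ₀ = τ₀ - β + 1 :=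
                fr_sub_gt ⟨hτ0.le, hτ1⟩ ⟨by linarith, by linarith⟩ hc
              linarith
        have hβupper : β ≤ g - δ := by
          have := fr_sub_le (x := g) (y := β) ⟨by linarith, by linarith⟩
            ⟨by linarith, by linarith⟩ (le_of_lt hβltg)
          linarith [this ▸ hgβ]
        exact ⟨β + ε', by linarith, by linarith, by linarith, by linarith,
          by rw [eσ], by rw [eσ]; linarith⟩
      · by_cases c4 : g' - ε' < φ₀
        · -- σ = γ - ε'
          push_neg at c1 c2 c3
          have eσ : Int.fract (γ - ε' - β) = g' - ε' := by
            rw [show Int.fract (γ - ε' - β) = Int.fract (g' - ε') from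
              fr_congr (-⌊β + g'⌋) (by rw [hγdef]; unfold Int.fract; push_cast; ring)]
            exact fr_eq_self ⟨by linarith, by linarith⟩
          have hγne : γ ≠ g := by
            intro h; rw [h] at hgγ; simp at hgγ; linarith
          have hγltg : γ < g := by
            rcases lt_or_gt_of_ne hγne with h | h
            · exact h
            · exfalso
              have hγg2 : g + δ ≤ γ := by
                have := fr_sub_le (x := γ) (y := g) ⟨by linarith, by linarith⟩
                  ⟨by linarith, by linarith⟩ (le_of_lt h)
                linarith [this ▸ hγg]
              have ecτ : Int.fract (γ - τ₀) = Int.fract (g' - φ₀) := by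
                apply fr_congr (-⌊β + g'⌋ - ⌊τ₀ - β⌋)
                rw [hγdef, hφdef]; unfold Int.fract; push_cast; ring
              have eval2 : Int.fract (g' - φ₀) = g' - φ₀ :=
                fr_eq_self ⟨by linarith, by linarith⟩
              rcases le_or_gt τ₀ γ with hc | hc
              · have : Int.fract (γ - τ₀) = γ - τ₀ :=
                  fr_sub_le ⟨by linarith, by linarith⟩ ⟨hτ0.le, hτ1⟩ hc
                rw [this, eval2] at ecτ; linarith
              · have : Int.fract (γ - τ₀) = γ - τ₀ + 1 :=
                  fr_sub_gt ⟨by linarith, by linarith⟩ ⟨hτ0.le, hτ1⟩ hc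
                rw [this, eval2] at ecτ; linarith
          have hγupper : γ ≤ g - δ := by
            have := fr_sub_le (x := g) (y := γ) ⟨by linarith, by linarith⟩
              ⟨by linarith, by linarith⟩ (le_of_lt hγltg)
            linarith [this ▸ hgγ]
          exact ⟨γ - ε', by linarith, by linarith, by linarith, by linarith,
            by rw [eσ]; linarith, by rw [eσ]⟩
        · push_neg at c1 c2 c3 c4
          exact ⟨τ₀, hτ0.le, hτ1, c1, c2, c3, c4⟩


lemma fr_sub_right (x y : ℝ) : Int.fract (x - Int.fract y) = Int.fract (x - y) := by
  apply fr_congr (⌊y⌋); unfold Int.fract; push_cast; ring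

lemma arc_left_mem {l r : ℝ} (hl : l ∈ Set.Ico (0:ℝ) 1) (hr : r ∈ Set.Ico (0:ℝ) 1) :
    arcMem l r l := by
  rw [arcMem_iff hl hr hl, sub_self, Int.fract_zero]
  exact (fr_mem _).1

lemma arc_right_mem {l r : ℝ} (hl : l ∈ Set.Ico (0:ℝ) 1) (hr : r ∈ Set.Ico (0:ℝ) 1) :
    arcMem l r r := by
  rw [arcMem_iff hl hr hr]

set_option maxHeartbeats 4000000 in
/-- If each vertex outside `X` is circularly-paired with a vertex in `X`
and `G[X]` admits a circular-arc representation normalized with respect to `G`, then `G`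
is a circular-arc graph. -/
theorem circularArc_of_normalizedRepOn
    {V : Type} [Fintype V] (G : LoopGraph V)
    (hu : ∀ u, ¬ G.Universal u) (ht : ∀ u v, ¬ G.TrueTwins u v)
    (X : Set V) (l r : V → ℝ)
    (h1 : ∀ v, v ∉ X → ∃ u ∈ X, G.CircularPair v u)
    (h2 : G.IsNormalizedRepOn X l r) :
    G.IsCircularArc := by
  classical
  obtain ⟨hlI, hrI, hlinj, hrinj, hlr, hiffX, hnorm⟩ := h2
  choose pf hpX hpC using h1
  set P : V → V := fun v => if h : v ∈ X then v else pf v h with hPdef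
  have hPX : ∀ v, v ∉ X → P v ∈ X := by
    intro v hv; rw [hPdef]; simp only [dif_neg hv]; exact hpX v hv
  have hPC : ∀ v, v ∉ X → G.CircularPair v (P v) := by
    intro v hv; rw [hPdef]; simp only [dif_neg hv]; exact hpC v hv
  -- endpoint finset and minimal gap
  set XF : Finset V := Set.Finite.toFinset (Set.toFinite X) with hXFdef
  have hXF : ∀ w, w ∈ XF ↔ w ∈ X := fun w => Set.Finite.mem_toFinset _
  set EF : Finset ℝ := XF.image l ∪ XF.image r with hEFdef
  have hEl : ∀ w ∈ X, l w ∈ EF := by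
    intro w hw
    exact Finset.mem_union_left _ (Finset.mem_image.mpr ⟨w, (hXF w).mpr hw, rfl⟩)
  have hEr : ∀ w ∈ X, r w ∈ EF := by
    intro w hw
    exact Finset.mem_union_right _ (Finset.mem_image.mpr ⟨w, (hXF w).mpr hw, rfl⟩)
  have hEIco : ∀ e ∈ EF, e ∈ Set.Ico (0:ℝ) 1 := by
    intro e he
    rcases Finset.mem_union.mp he with h | h <;>
      obtain ⟨w, hw, rfl⟩ := Finset.mem_image.mp h
    · exact hlI w ((hXF w).mp hw)
    · exact hrI w ((hXF w).mp hw)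
  set DF : Finset ℝ :=
    ((EF ×ˢ EF).filter (fun p => p.1 ≠ p.2)).image
      (fun p => min |p.1 - p.2| (1 - |p.1 - p.2|)) with hDFdef
  set δ : ℝ := (insert (1/4 : ℝ) DF).min' ⟨1/4, Finset.mem_insert_self _ _⟩ with hδdef
  have hδ4 : δ ≤ 1/4 := Finset.min'_le _ _ (Finset.mem_insert_self _ _)
  have hδpos : 0 < δ := by
    rw [hδdef]; refine (Finset.lt_min'_iff _ _).mpr ?_
    intro y hy
    rcases Finset.mem_insert.mp hy with rfl | hy
    · norm_num
    · obtain ⟨⟨e, f⟩, hef, rfl⟩ := Finset.mem_image.mp hy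
      obtain ⟨hmem, hne⟩ := Finset.mem_filter.mp hef
      obtain ⟨he, hf⟩ := Finset.mem_product.mp hmem
      have h1 := hEIco e he; have h2 := hEIco f hf
      simp only [lt_min_iff]
      constructor
      · exact abs_pos.mpr (sub_ne_zero.mpr hne)
      · rcases abs_cases (e - f) with ⟨habs, _⟩ | ⟨habs, _⟩ <;>
          rw [habs] <;> [linarith [h1.2, h2.1]; linarith [h1.1, h2.2]]
  have gapAbs : ∀ e ∈ EF, ∀ f ∈ EF, e ≠ f → δ ≤ |e - f| ∧ |e - f| ≤ 1 - δ := by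
    intro e he f hf hne
    have hmem : min |e - f| (1 - |e - f|) ∈ insert (1/4 : ℝ) DF :=
      Finset.mem_insert_of_mem (Finset.mem_image.mpr
        ⟨(e, f), Finset.mem_filter.mpr ⟨Finset.mem_product.mpr ⟨he, hf⟩, hne⟩, rfl⟩)
    have := Finset.min'_le _ _ hmem
    rw [← hδdef] at this
    simp only [le_min_iff] at this
    exact ⟨this.1, by linarith [this.2]⟩
  have gapFr : ∀ e ∈ EF, ∀ f ∈ EF, e ≠ f →
      δ ≤ Int.fract (e - f) ∧ Int.fract (e - f) ≤ 1 - δ := by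
    intro e he f hf hne
    obtain ⟨h1, h2⟩ := gapAbs e he f hf hne
    have hel := hEIco e he; have hfl := hEIco f hf
    rcases le_or_gt f e with hc | hc
    · rw [fr_sub_le hel hfl hc]
      rw [abs_of_nonneg (by linarith)] at h1 h2
      exact ⟨h1, h2⟩
    · rw [fr_sub_gt hel hfl hc]
      rw [abs_of_neg (by linarith)] at h1 h2
      constructor <;> linarith
  -- epsilons
  set n : ℕ := Fintype.card V with hndef
  set ι : V ≃ Fin n := Fintype.equivFin V with hιdef
  set eps : V → ℝ := fun v => δ * ((ι v : ℕ) + 1) / (3 * (n + 1)) with hepsdef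
  have heps0 : ∀ v, 0 < eps v := by
    intro v; rw [hepsdef]
    apply div_pos (by positivity) (by positivity)
  have hepsδ : ∀ v, eps v < δ/3 := by
    intro v; rw [hepsdef]
    rw [div_lt_iff₀ (by positivity)]
    have hlt : ((ι v : ℕ) : ℝ) + 1 < (n : ℝ) + 1 := by
      have := (ι v).2
      push_cast
      exact_mod_cast by push_cast; linarith [(by exact_mod_cast this : ((ι v : ℕ):ℝ) < n)]
    calc δ * ((ι v : ℕ) + 1) < δ * (n + 1) := by
          apply mul_lt_mul_of_pos_left hlt hδpos
      _ = δ/3 * (3 * (n+1)) := by ring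
  have hepsInj : ∀ v w, eps v = eps w → v = w := by
    intro v w h
    rw [hepsdef] at h
    have h3 : (3 * ((n:ℝ) + 1)) ≠ 0 := by positivity
    rw [div_left_inj' h3] at h
    have h5 := mul_left_cancel₀ (ne_of_gt hδpos) h
    have h6 : ((ι v : ℕ) : ℝ) = (ι w : ℕ) := by linarith
    have h4 : (ι v : ℕ) = (ι w : ℕ) := by exact_mod_cast h6
    exact ι.injective (Fin.ext h4)
  -- the representation
  set L : V → ℝ := fun v => if v ∈ X then l v else Int.fract (r (P v) + eps v) with hLdef
  set R : V → ℝ := fun v => if v ∈ X then r v else Int.fract (l (P v) - eps v) with hRdef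
  have hLX : ∀ v ∈ X, L v = l v := fun v hv => if_pos hv
  have hRX : ∀ v ∈ X, R v = r v := fun v hv => if_pos hv
  have hLn : ∀ v, v ∉ X → L v = Int.fract (r (P v) + eps v) := fun v hv => if_neg hv
  have hRn : ∀ v, v ∉ X → R v = Int.fract (l (P v) - eps v) := fun v hv => if_neg hv
  refine ⟨L, R, ?_, ?_, ?_, ?_⟩
  · intro v
    by_cases hv : v ∈ X
    · rw [hLX v hv]; exact hlI v hv
    · rw [hLn v hv]; exact fr_mem _
  · intro v
    by_cases hv : v ∈ X
    · rw [hRX v hv]; exact hrI v hv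
    · rw [hRn v hv]; exact fr_mem _
  · -- injectivity of endpoints
    set eL : V → ℝ := fun v => if v ∈ X then l v else r (P v) with heLdef
    set sL : V → ℝ := fun v => if v ∈ X then 0 else eps v with hsLdef
    set eR : V → ℝ := fun v => if v ∈ X then r v else l (P v) with heRdef
    set sR : V → ℝ := fun v => if v ∈ X then 0 else -eps v with hsRdef
    have hLeq : ∀ v, L v = Int.fract (eL v + sL v) := by
      intro v
      by_cases hv : v ∈ X
      · rw [hLX v hv, heLdef, hsLdef]; simp only [if_pos hv, add_zero]
        exact (fr_eq_self (hlI v hv)).symm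
      · rw [hLn v hv, heLdef, hsLdef]; simp only [if_neg hv]
    have hReq : ∀ v, R v = Int.fract (eR v + sR v) := by
      intro v
      by_cases hv : v ∈ X
      · rw [hRX v hv, heRdef, hsRdef]; simp only [if_pos hv, add_zero]
        exact (fr_eq_self (hrI v hv)).symm
      · rw [hRn v hv, heRdef, hsRdef]; simp only [if_neg hv]
        rw [show l (P v) + -eps v = l (P v) - eps v by ring]
    have heLE : ∀ v, eL v ∈ EF := by
      intro v; rw [heLdef]
      by_cases hv : v ∈ X
      · simp only [if_pos hv]; exact hEl v hv
      · simp only [if_neg hv]; exact hEr _ (hPX v hv)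
    have heRE : ∀ v, eR v ∈ EF := by
      intro v; rw [heRdef]
      by_cases hv : v ∈ X
      · simp only [if_pos hv]; exact hEr v hv
      · simp only [if_neg hv]; exact hEl _ (hPX v hv)
    have hsLabs : ∀ v, |sL v| ≤ δ/3 := by
      intro v; rw [hsLdef]
      by_cases hv : v ∈ X
      · simp only [if_pos hv, abs_zero]; linarith
      · simp only [if_neg hv, abs_of_pos (heps0 v)]; linarith [hepsδ v]
    have hsRabs : ∀ v, |sR v| ≤ δ/3 := by
      intro v; rw [hsRdef]
      by_cases hv : v ∈ X
      · simp only [if_pos hv, abs_zero]; linarith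
      · simp only [if_neg hv, abs_neg, abs_of_pos (heps0 v)]; linarith [hepsδ v]
    have hLL : ∀ v w, L v = L w → v = w := by
      intro v w hvw
      rw [hLeq v, hLeq w] at hvw
      obtain ⟨he, hs⟩ := sep hδpos hδ4
        (fun hne => gapAbs _ (heLE v) _ (heLE w) hne) (hsLabs v) (hsLabs w) hvw
      rw [heLdef] at he; rw [hsLdef] at hs
      by_cases hv : v ∈ X <;> by_cases hw : w ∈ X
      · simp only [if_pos hv, if_pos hw] at he; exact hlinj hv hw he
      · simp only [if_pos hv, if_neg hw] at hs; exact absurd hs.symm (ne_of_gt (heps0 w))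
      · simp only [if_neg hv, if_pos hw] at hs; exact absurd hs (ne_of_gt (heps0 v))
      · simp only [if_neg hv, if_neg hw] at hs; exact hepsInj v w hs
    have hRR : ∀ v w, R v = R w → v = w := by
      intro v w hvw
      rw [hReq v, hReq w] at hvw
      obtain ⟨he, hs⟩ := sep hδpos hδ4
        (fun hne => gapAbs _ (heRE v) _ (heRE w) hne) (hsRabs v) (hsRabs w) hvw
      rw [heRdef] at he; rw [hsRdef] at hs
      by_cases hv : v ∈ X <;> by_cases hw : w ∈ X
      · simp only [if_pos hv, if_pos hw] at he; exact hrinj hv hw he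
      · simp only [if_pos hv, if_neg hw] at hs
        exact absurd hs.symm (ne_of_lt (neg_lt_zero.mpr (heps0 w)))
      · simp only [if_neg hv, if_pos hw] at hs
        exact absurd hs (ne_of_lt (neg_lt_zero.mpr (heps0 v)))
      · simp only [if_neg hv, if_neg hw] at hs
        exact hepsInj v w (by linarith)
    have hLR : ∀ v w, L v ≠ R w := by
      intro v w hvw
      rw [hLeq v, hReq w] at hvw
      obtain ⟨he, hs⟩ := sep hδpos hδ4
        (fun hne => gapAbs _ (heLE v) _ (heRE w) hne) (hsLabs v) (hsRabs w) hvw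
      rw [heLdef, heRdef] at he; rw [hsLdef, hsRdef] at hs
      by_cases hv : v ∈ X <;> by_cases hw : w ∈ X
      · simp only [if_pos hv, if_pos hw] at he; exact hlr v hv w hw he
      · simp only [if_pos hv, if_neg hw] at hs; linarith [heps0 w]
      · simp only [if_neg hv, if_pos hw] at hs; linarith [heps0 v]
      · simp only [if_neg hv, if_neg hw] at hs; linarith [heps0 v, heps0 w]
    intro x y hxy
    match x, y with
    | Sum.inl v, Sum.inl w =>
      simp only [Sum.elim_inl] at hxy; exact congrArg Sum.inl (hLL v w hxy)
    | Sum.inl v, Sum.inr w =>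
      simp only [Sum.elim_inl, Sum.elim_inr] at hxy; exact absurd hxy (hLR v w)
    | Sum.inr v, Sum.inl w =>
      simp only [Sum.elim_inl, Sum.elim_inr] at hxy; exact absurd hxy.symm (hLR w v)
    | Sum.inr v, Sum.inr w =>
      simp only [Sum.elim_inr] at hxy; exact congrArg Sum.inr (hRR v w hxy)
  · -- adjacency
    have keyVX : ∀ v, v ∉ X → ∀ w, w ∈ X →
        (G.Adj v w ↔ ∃ t ∈ Set.Ico (0:ℝ) 1,
          arcMem (L v) (R v) t ∧ arcMem (l w) (r w) t) := by
      intro v hv w hw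
      have hu : P v ∈ X := hPX v hv
      have hCP := hPC v hv
      have hnadj : ¬ G.Adj v (P v) := hCP.2
      have hS1 : ∀ x, ¬ G.Adj (P v) x → G.nbhd x ⊆ G.nbhd v := hCP.1.1
      have hS2 : ∀ y, ¬ G.Adj v y → G.nbhd y ⊆ G.nbhd (P v) := hCP.1.2
      set a := l (P v) with hadef
      set b := r (P v) with hbdef
      set g := Int.fract (a - b) with hgdef
      set ε := eps v with hεdef
      have haI := hlI _ hu
      have hbI := hrI _ hu
      have hab : a ≠ b := hlr _ hu _ hu
      obtain ⟨hg1, hg2⟩ := gapFr a (hEl _ hu) b (hEr _ hu) hab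
      have hε0 : 0 < ε := heps0 v
      have hεδ : ε < δ/3 := hepsδ v
      have hAv : ∀ t ∈ Set.Ico (0:ℝ) 1, (arcMem (L v) (R v) t ↔
          (ε ≤ Int.fract (t - b) ∧ Int.fract (t - b) ≤ g - ε)) := by
        intro t htI
        rw [hLn v hv, hRn v hv]
        exact mem2 haI hbI htI hε0 (by linarith)
      have hAu : ∀ t ∈ Set.Ico (0:ℝ) 1, (arcMem a b t ↔
          ¬(0 < Int.fract (t - b) ∧ Int.fract (t - b) < g)) :=
        fun t htI => mem1 haI hbI htI hab
      by_cases hwu : w = P v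
      · subst hwu
        apply iff_of_false hnadj
        rintro ⟨t, htI, hm1, hm2⟩
        obtain ⟨hτ1, hτ2⟩ := (hAv t htI).mp hm1
        exact ((hAu t htI).mp hm2) ⟨by linarith, by linarith⟩
      · have hwu' : P v ≠ w := Ne.symm hwu
        have hlwb : l w ≠ b := hlr w hw _ hu
        have hlwa : l w ≠ a := fun h => hwu (hlinj hw hu h)
        have hrwb : r w ≠ b := fun h => hwu (hrinj hw hu h)
        have hrwa : r w ≠ a := fun h => (hlr _ hu w hw) h.symm
        set x := Int.fract (l w - b) with hxdef
        set hh := Int.fract (r w - l w) with hhdef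
        obtain ⟨hx1, hx2⟩ := gapFr (l w) (hEl w hw) b (hEr _ hu) hlwb
        have hh0 : 0 ≤ hh := (fr_mem _).1
        have hh1 : hh < 1 := (fr_mem _).2
        have hxg1 : δ ≤ Int.fract (x - g) := by
          rw [hxdef, hgdef, fr_sub_fr, show (l w - b) - (a - b) = l w - a by ring]
          exact (gapFr (l w) (hEl w hw) a (hEl _ hu) hlwa).1
        have hxg2 : δ ≤ Int.fract (g - x) := by
          rw [hxdef, hgdef, fr_sub_fr, show (a - b) - (l w - b) = a - l w by ring]
          exact (gapFr a (hEl _ hu) (l w) (hEl w hw) (Ne.symm hlwa)).1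
        have hxg : x ≤ g - δ ∨ g + δ ≤ x := by
          rcases le_or_gt x g with hc | hc
          · left
            have hne : x ≠ g := by
              intro h
              rw [h, sub_self, Int.fract_zero] at hxg2; linarith
            have := fr_sub_le (x := g) (y := x)
              ⟨by linarith, by linarith⟩ ⟨(fr_mem _).1, (fr_mem _).2⟩
              (lt_of_le_of_ne hc hne).le
            rw [this] at hxg2; linarith
          · right
            have := fr_sub_le (x := x) (y := g)
              ⟨(fr_mem _).1, (fr_mem _).2⟩ ⟨by linarith, by linarith⟩ hc.le
            rw [this] at hxg1; linarith
        have hxh : δ ≤ Int.fract (x + hh) := by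
          rw [hxdef, hhdef, fr_add_fr, show (l w - b) + (r w - l w) = r w - b by ring]
          exact (gapFr (r w) (hEr w hw) b (hEr _ hu) hrwb).1
        have memw : ∀ t ∈ Set.Ico (0:ℝ) 1, (arcMem (l w) (r w) t ↔
            Int.fract (Int.fract (t - b) - x) ≤ hh) :=
          fun t htI => mem3 b (hlI w hw) (hrI w hw) htI
        have htε : Int.fract (Int.fract (b + ε) - b) = ε := by
          rw [fr_sub_left, show b + ε - b = ε by ring]
          exact fr_eq_self ⟨hε0.le, by linarith⟩
        have htg : Int.fract (Int.fract (b + (g - ε)) - b) = g - ε := by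
          rw [fr_sub_left, show b + (g - ε) - b = g - ε by ring]
          exact fr_eq_self ⟨by linarith, by linarith⟩
        have hcomb : G.Adj v w ↔ ¬ (G.nbhd w ⊆ G.nbhd (P v)) := by
          constructor
          · intro hvw hsub
            exact hnadj (G.symm _ _ (hsub (G.symm _ _ hvw)))
          · intro hns
            by_contra hna
            exact hns (hS2 w hna)
        have hgeo : (∃ t ∈ Set.Ico (0:ℝ) 1,
            arcMem (L v) (R v) t ∧ arcMem (l w) (r w) t) ↔
            ¬ (G.nbhd w ⊆ G.nbhd (P v)) := by
          constructor
          · rintro ⟨t, htI, hm1, hm2⟩ hsub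
            have haw : G.Adj (P v) w := hsub (G.refl w)
            have hpc := ((hnorm _ hu w hw haw hwu').1).mpr hsub
            have hmem : arcMem a b t := hpc.1 t htI hm2
            obtain ⟨hτ1, hτ2⟩ := (hAv t htI).mp hm1
            exact ((hAu t htI).mp hmem) ⟨by linarith, by linarith⟩
          · intro hns
            by_cases haw : G.Adj (P v) w
            · have hnpc : ¬ arcProperContains a b (l w) (r w) :=
                fun hpc => hns (((hnorm _ hu w hw haw hwu').1).mp hpc)
              by_cases hsubwu : arcSubset (l w) (r w) a b
              · have hsubuw : arcSubset a b (l w) (r w) := by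
                  by_contra hno; exact hnpc ⟨hsubwu, hno⟩
                have hbw : arcMem (l w) (r w) b := hsubuw b hbI (arc_right_mem haI hbI)
                have hmem0 : Int.fract ((0:ℝ) - x) ≤ hh := by
                  have h0 : Int.fract (b - b) = 0 := by rw [sub_self, Int.fract_zero]
                  have := (memw b hbI).mp hbw; rw [h0] at this; exact this
                have hgoal : Int.fract (ε - x) ≤ hh :=
                  bl1 hδpos hε0 (by linarith) hx1 hx2 hxh hh0 hh1 le_rfl hε0 hmem0
                exact ⟨Int.fract (b + ε), fr_mem _,
                  (hAv _ (fr_mem _)).mpr (by rw [htε]; exact ⟨le_rfl, by linarith⟩),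
                  (memw _ (fr_mem _)).mpr (by rw [htε]; exact hgoal)⟩
              · unfold arcSubset at hsubwu
                push_neg at hsubwu
                obtain ⟨t₀, ht₀I, hm₀, hnm₀⟩ := hsubwu
                have hτ₀ : 0 < Int.fract (t₀ - b) ∧ Int.fract (t₀ - b) < g := by
                  by_contra hc; exact hnm₀ ((hAu t₀ ht₀I).mpr hc)
                obtain ⟨hτa, hτb⟩ := hτ₀
                have hmw₀ : Int.fract (Int.fract (t₀ - b) - x) ≤ hh := (memw t₀ ht₀I).mp hm₀
                rcases lt_or_ge (Int.fract (t₀ - b)) ε with hcε | hcε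
                · have hgoal : Int.fract (ε - x) ≤ hh :=
                    bl1 hδpos hε0 (by linarith) hx1 hx2 hxh hh0 hh1 (fr_mem _).1 hcε hmw₀
                  exact ⟨Int.fract (b + ε), fr_mem _,
                    (hAv _ (fr_mem _)).mpr (by rw [htε]; exact ⟨le_rfl, by linarith⟩),
                    (memw _ (fr_mem _)).mpr (by rw [htε]; exact hgoal)⟩
                · rcases lt_or_ge (g - ε) (Int.fract (t₀ - b)) with hcg | hcg
                  · have hgoal : Int.fract (g - ε - x) ≤ hh :=
                      bl2 hδpos hε0 (by linarith) hx1 hx2 hg1 hg2 hxg hcg hτb hmw₀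
                    exact ⟨Int.fract (b + (g - ε)), fr_mem _,
                      (hAv _ (fr_mem _)).mpr (by rw [htg]; exact ⟨by linarith, le_rfl⟩),
                      (memw _ (fr_mem _)).mpr (by rw [htg]; exact hgoal)⟩
                  · exact ⟨t₀, ht₀I, (hAv _ ht₀I).mpr ⟨hcε, hcg⟩, hm₀⟩
            · have hlwmem : arcMem (l w) (r w) (l w) := arc_left_mem (hlI w hw) (hrI w hw)
              have hnab : ¬ arcMem a b (l w) := fun hmem =>
                haw ((hiffX _ hu w hw).mpr ⟨l w, hlI w hw, hmem, hlwmem⟩)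
              have hτ : 0 < x ∧ x < g := by
                by_contra hc; exact hnab ((hAu (l w) (hlI w hw)).mpr hc)
              have hxle : x ≤ g - δ := by
                rcases hxg with h | h
                · exact h
                · linarith [hτ.2]
              exact ⟨l w, hlI w hw,
                (hAv _ (hlI w hw)).mpr ⟨by linarith, by linarith⟩, hlwmem⟩
        rw [hcomb]
        exact hgeo.symm
    have keyVV : ∀ v, v ∉ X → ∀ v', v' ∉ X →
        (G.Adj v v' ↔ ∃ t ∈ Set.Ico (0:ℝ) 1,
          arcMem (L v) (R v) t ∧ arcMem (L v') (R v') t) := by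
      intro v hv v' hv'
      have hu : P v ∈ X := hPX v hv
      have hu' : P v' ∈ X := hPX v' hv'
      have hCP := hPC v hv
      have hCP' := hPC v' hv'
      have hS1 : ∀ x, ¬ G.Adj (P v) x → G.nbhd x ⊆ G.nbhd v := hCP.1.1
      have hS2 : ∀ y, ¬ G.Adj v y → G.nbhd y ⊆ G.nbhd (P v) := hCP.1.2
      have hS1' : ∀ x, ¬ G.Adj (P v') x → G.nbhd x ⊆ G.nbhd v' := hCP'.1.1
      have hS2' : ∀ y, ¬ G.Adj v' y → G.nbhd y ⊆ G.nbhd (P v') := hCP'.1.2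
      set a := l (P v) with hadef
      set b := r (P v) with hbdef
      set a' := l (P v') with hadef'
      set b' := r (P v') with hbdef'
      set g := Int.fract (a - b) with hgdef
      set g' := Int.fract (a' - b') with hgdef'
      set ε := eps v with hεdef
      set ε' := eps v' with hεdef'
      have haI := hlI _ hu
      have hbI := hrI _ hu
      have haI' := hlI _ hu'
      have hbI' := hrI _ hu'
      have hab : a ≠ b := hlr _ hu _ hu
      have hab' : a' ≠ b' := hlr _ hu' _ hu'
      obtain ⟨hg1, hg2⟩ := gapFr a (hEl _ hu) b (hEr _ hu) hab
      obtain ⟨hg1', hg2'⟩ := gapFr a' (hEl _ hu') b' (hEr _ hu') hab'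
      have hε0 : 0 < ε := heps0 v
      have hεδ : ε < δ/3 := hepsδ v
      have hε0' : 0 < ε' := heps0 v'
      have hεδ' : ε' < δ/3 := hepsδ v'
      have hAv : ∀ t ∈ Set.Ico (0:ℝ) 1, (arcMem (L v) (R v) t ↔
          (ε ≤ Int.fract (t - b) ∧ Int.fract (t - b) ≤ g - ε)) := by
        intro t htI
        rw [hLn v hv, hRn v hv]
        exact mem2 haI hbI htI hε0 (by linarith)
      have hAu : ∀ t ∈ Set.Ico (0:ℝ) 1, (arcMem a b t ↔
          ¬(0 < Int.fract (t - b) ∧ Int.fract (t - b) < g)) :=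
        fun t htI => mem1 haI hbI htI hab
      by_cases huu' : P v = P v'
      · -- same partner
        have hnadj' : ¬ G.Adj (P v') v := by
          rw [← huu']; exact fun h => hCP.2 (G.symm _ _ h)
        have hadjvv : G.Adj v v' := G.symm _ _ (hS1' v hnadj' (G.refl v))
        have hAv'2 : ∀ t ∈ Set.Ico (0:ℝ) 1, (arcMem (L v') (R v') t ↔
            (ε' ≤ Int.fract (t - b) ∧ Int.fract (t - b) ≤ g - ε')) := by
          intro t htI
          rw [hLn v' hv', hRn v' hv', ← huu']
          exact mem2 haI hbI htI hε0' (by linarith)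
        refine ⟨fun _ => ?_, fun _ => hadjvv⟩
        have hm1 : ε ≤ max ε ε' := le_max_left _ _
        have hm2 : ε' ≤ max ε ε' := le_max_right _ _
        have hmδ : max ε ε' < δ/3 := max_lt hεδ hεδ'
        have htm : Int.fract (Int.fract (b + max ε ε') - b) = max ε ε' := by
          rw [fr_sub_left, show b + max ε ε' - b = max ε ε' by ring]
          exact fr_eq_self ⟨by linarith, by linarith⟩
        refine ⟨Int.fract (b + max ε ε'), fr_mem _,
          (hAv _ (fr_mem _)).mpr ?_, (hAv'2 _ (fr_mem _)).mpr ?_⟩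
        · rw [htm]; exact ⟨hm1, by linarith⟩
        · rw [htm]; exact ⟨hm2, by linarith⟩
      · -- different partners
        have hAv' : ∀ t ∈ Set.Ico (0:ℝ) 1, (arcMem (L v') (R v') t ↔
            (ε' ≤ Int.fract (t - b') ∧ Int.fract (t - b') ≤ g' - ε')) := by
          intro t htI
          rw [hLn v' hv', hRn v' hv']
          exact mem2 haI' hbI' htI hε0' (by linarith)
        have hAu' : ∀ t ∈ Set.Ico (0:ℝ) 1, (arcMem a' b' t ↔
            ¬(0 < Int.fract (t - b') ∧ Int.fract (t - b') < g')) :=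
          fun t htI => mem1 haI' hbI' htI hab'
        have hba : b ≠ b' := fun h => huu' (hrinj hu hu' h)
        have haa : a ≠ a' := fun h => huu' (hlinj hu hu' h)
        have habp : a ≠ b' := hlr _ hu _ hu'
        have hapb : a' ≠ b := hlr _ hu' _ hu
        set β := Int.fract (b' - b) with hβdef
        obtain ⟨hβ1, hβ2⟩ := gapFr b' (hEr _ hu') b (hEr _ hu) (Ne.symm hba)
        have hβg : δ ≤ Int.fract (β - g) := by
          rw [hβdef, hgdef, fr_sub_fr, show (b' - b) - (a - b) = b' - a by ring]
          exact (gapFr b' (hEr _ hu') a (hEl _ hu) (Ne.symm habp)).1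
        have hgβ : δ ≤ Int.fract (g - β) := by
          rw [hβdef, hgdef, fr_sub_fr, show (a - b) - (b' - b) = a - b' by ring]
          exact (gapFr a (hEl _ hu) b' (hEr _ hu') habp).1
        have hγeq : Int.fract (β + g') = Int.fract (a' - b) := by
          rw [hβdef, hgdef', fr_add_fr, show (b' - b) + (a' - b') = a' - b by ring]
        obtain ⟨hγb1, hγb2⟩ := gapFr a' (hEl _ hu') b (hEr _ hu) hapb
        have hγ1 : δ ≤ Int.fract (β + g') := by rw [hγeq]; exact hγb1
        have hγ2 : Int.fract (β + g') ≤ 1 - δ := by rw [hγeq]; exact hγb2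
        have hγg : δ ≤ Int.fract (Int.fract (β + g') - g) := by
          rw [hγeq, hgdef, fr_sub_fr, show (a' - b) - (a - b) = a' - a by ring]
          exact (gapFr a' (hEl _ hu') a (hEl _ hu) (Ne.symm haa)).1
        have hgγ : δ ≤ Int.fract (g - Int.fract (β + g')) := by
          rw [hγeq, hgdef, fr_sub_fr, show (a - b) - (a' - b) = a - a' by ring]
          exact (gapFr a (hEl _ hu) a' (hEl _ hu') haa).1
        by_cases hadj : G.Adj (P v) (P v')
        · have hnadjv' : ¬ G.Adj v' (P v') := hCP'.2
          have hcomb : G.Adj v v' ↔ ¬ G.TwoOverlapEdge (P v) (P v') := by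
            constructor
            · intro hvv' h2o
              have hnuv : ¬ G.Adj (P v) v := fun h => hCP.2 (G.symm _ _ h)
              have hsub : G.nbhd v ⊆ G.nbhd (P v') := h2o.2.2 v hnuv
              exact hnadjv' (G.symm _ _ (hsub hvv'))
            · intro hn2o
              by_contra hnvv'
              have hNv'u : G.nbhd v' ⊆ G.nbhd (P v) := hS2 v' hnvv'
              have hNvu' : G.nbhd v ⊆ G.nbhd (P v') :=
                hS2' v (fun h => hnvv' (G.symm _ _ h))
              apply hn2o
              refine ⟨⟨hadj, ?_, ?_⟩, ?_, ?_⟩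
              · intro hsub
                exact hnadjv' (G.symm _ _ (hsub (hNv'u (G.refl v'))))
              · intro hsub
                exact hCP.2 (G.symm _ _ (hsub (hNvu' (G.refl v))))
              · intro x hx
                exact (hS1' x hx).trans hNv'u
              · intro y hy
                exact (hS1 y hy).trans hNvu'
          have hnormuu := hnorm _ hu _ hu' hadj huu'
          have hgeo : (∃ t ∈ Set.Ico (0:ℝ) 1,
              arcMem (L v) (R v) t ∧ arcMem (L v') (R v') t) ↔
              ¬ arcsCover a b a' b' := by
            constructor
            · rintro ⟨t, htI, hm, hm'⟩ hcov
              rcases hcov t htI with hc | hc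
              · obtain ⟨h1', h2'⟩ := (hAv t htI).mp hm
                exact ((hAu t htI).mp hc) ⟨by linarith, by linarith⟩
              · obtain ⟨h1', h2'⟩ := (hAv' t htI).mp hm'
                exact ((hAu' t htI).mp hc) ⟨by linarith, by linarith⟩
            · intro hnc
              unfold arcsCover at hnc
              push_neg at hnc
              obtain ⟨t₀, ht₀I, hn1, hn2⟩ := hnc
              have hτ : 0 < Int.fract (t₀ - b) ∧ Int.fract (t₀ - b) < g := by
                by_contra hc; exact hn1 ((hAu t₀ ht₀I).mpr hc)
              have hφ : 0 < Int.fract (t₀ - b') ∧ Int.fract (t₀ - b') < g' := by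
                by_contra hc; exact hn2 ((hAu' t₀ ht₀I).mpr hc)
              have hφβ : Int.fract (Int.fract (t₀ - b) - β) = Int.fract (t₀ - b') := by
                rw [hβdef, fr_sub_fr, show (t₀ - b) - (b' - b) = t₀ - b' by ring]
              obtain ⟨σ, hσ0, hσ1, hσε, hσg, hσε', hσg'⟩ :=
                glue hδpos hδ4 hε0 hεδ hε0' hεδ' hg1 hg2 hg1' hg2' hβ1 hβ2
                  hβg hgβ hγ1 hγ2 hγg hgγ hτ.1 hτ.2
                  (by rw [hφβ]; exact hφ.1) (by rw [hφβ]; exact hφ.2)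
              have htσ : Int.fract (Int.fract (b + σ) - b) = σ := by
                rw [fr_sub_left, show b + σ - b = σ by ring]
                exact fr_eq_self ⟨hσ0, hσ1⟩
              have htσ' : Int.fract (Int.fract (b + σ) - b') = Int.fract (σ - β) := by
                rw [fr_sub_left, hβdef, fr_sub_right,
                  show σ - (b' - b) = b + σ - b' by ring]
              refine ⟨Int.fract (b + σ), fr_mem _,
                (hAv _ (fr_mem _)).mpr ?_, (hAv' _ (fr_mem _)).mpr ?_⟩
              · rw [htσ]; exact ⟨hσε, hσg⟩
              · rw [htσ']; exact ⟨hσε', hσg'⟩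
          rw [hcomb, ← hnormuu.2]
          exact hgeo.symm
        · -- partners non-adjacent
          have hvv' : G.Adj v v' := by
            by_contra hn
            have hNu'v : G.nbhd (P v') ⊆ G.nbhd v := hS1 (P v') hadj
            have hNvu' : G.nbhd v ⊆ G.nbhd (P v') :=
              hS2' v (fun h => hn (G.symm _ _ h))
            refine ht v (P v') ⟨?_, Set.Subset.antisymm hNvu' hNu'v⟩
            intro h
            rw [h] at hv
            exact hv hu'
          have hb'mem : arcMem a' b' b' := arc_right_mem haI' hbI'
          have hnab' : ¬ arcMem a b b' := fun hmem =>
            hadj ((hiffX _ hu _ hu').mpr ⟨b', hbI', hmem, hb'mem⟩)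
          have hβτ : 0 < β ∧ β < g := by
            by_contra hc; exact hnab' ((hAu b' hbI').mpr hc)
          have hβle : β ≤ g - δ := by
            have he := fr_sub_le (x := g) (y := β)
              ⟨by linarith, by linarith⟩ ⟨by linarith [hβτ.1], by linarith [hβτ.2]⟩
              hβτ.2.le
            rw [he] at hgβ; linarith
          have htw : Int.fract (Int.fract (b' + ε') - b) = β + ε' := by
            rw [fr_sub_left, show b' + ε' - b = (b' - b) + ε' by ring,
              show Int.fract ((b' - b) + ε') = Int.fract (Int.fract (b' - b) + ε') from
                (fr_add_left _ _).symm, ← hβdef]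
            exact fr_eq_self ⟨by linarith, by linarith⟩
          have htw' : Int.fract (Int.fract (b' + ε') - b') = ε' := by
            rw [fr_sub_left, show b' + ε' - b' = ε' by ring]
            exact fr_eq_self ⟨by linarith, by linarith⟩
          refine ⟨fun _ => ⟨Int.fract (b' + ε'), fr_mem _,
            (hAv _ (fr_mem _)).mpr ?_, (hAv' _ (fr_mem _)).mpr ?_⟩, fun _ => hvv'⟩
          · rw [htw]
            constructor
            · linarith [hβτ.1]
            · linarith
          · rw [htw']; exact ⟨le_rfl, by linarith⟩
    intro p q
    by_cases hp : p ∈ X <;> by_cases hq : q ∈ X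
    · rw [hLX p hp, hRX p hp, hLX q hq, hRX q hq]; exact hiffX p hp q hq
    · rw [hLX p hp, hRX p hp]
      constructor
      · intro h
        obtain ⟨t, htI, hm1, hm2⟩ := (keyVX q hq p hp).mp (G.symm _ _ h)
        exact ⟨t, htI, hm2, hm1⟩
      · rintro ⟨t, htI, hm1, hm2⟩
        exact G.symm _ _ ((keyVX q hq p hp).mpr ⟨t, htI, hm2, hm1⟩)
    · rw [hLX q hq, hRX q hq]; exact keyVX p hp q hq
    · exact keyVV p hp q hq
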